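/- The natural homomorphism O(A_4^∨(5)) → O(D) is surjective: let f be an additive group automorphism of D = ((1/5)A_4)/A_4^∨ preserving the discriminant quadratic form, i.e. such that whenever x, y ∈ (1/5)A_4 satisfy f(x + A_4^∨) = y + A_4^∨ one has 5⟨x,x⟩ − 5⟨y,y⟩ ∈ 2ℤ. Then there exists a ℚ-linear automorphism g of V with ⟨g(x), g(y)⟩ = ⟨x,y⟩ for all x, y ∈ V and g(A_4^∨) = A_4^∨ such that f(x + A_4^∨) = g(x) + A_4^∨ for all x ∈ (1/5)A_4. -/

import Mathlib

open scoped BigOperators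

noncomputable section

/-- The standard bilinear form `⟨x,y⟩ = ∑ xᵢ yᵢ` on `ℚ^5`. -/
def form (x y : Fin 5 → ℚ) : ℚ := ∑ i, x i * y i

/-- The root lattice `A₄ = {a ∈ ℤ^5 : a₁ + ⋯ + a₅ = 0}` inside `ℚ^5`. -/
def A4 : AddSubgroup (Fin 5 → ℚ) where
  carrier := {a | (∀ i, ∃ n : ℤ, a i = (n : ℚ)) ∧ ∑ i, a i = 0}
  zero_mem' := ⟨fun _ => ⟨0, by simp⟩, by simp⟩
  add_mem' := by
    rintro a b ⟨ha, ha0⟩ ⟨hb, hb0⟩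
    constructor
    · intro i
      obtain ⟨n, hn⟩ := ha i
      obtain ⟨m, hm⟩ := hb i
      exact ⟨n + m, by push_cast [Pi.add_apply, hn, hm]; ring⟩
    · simp [Pi.add_apply, Finset.sum_add_distrib, ha0, hb0]
  neg_mem' := by
    rintro a ⟨ha, ha0⟩
    constructor
    · intro i
      obtain ⟨n, hn⟩ := ha i
      exact ⟨-n, by push_cast [Pi.neg_apply, hn]; ring⟩
    · simp [Pi.neg_apply, Finset.sum_neg_distrib, ha0]

/-- The fundamental weight `w₁ = (4,-1,-1,-1,-1)/5` of `A₄`. -/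
def w1 : Fin 5 → ℚ := ![4/5, -1/5, -1/5, -1/5, -1/5]
/-- The fundamental weight `w₂ = (3,3,-2,-2,-2)/5` of `A₄`. -/
def w2 : Fin 5 → ℚ := ![3/5, 3/5, -2/5, -2/5, -2/5]
/-- The fundamental weight `w₃ = (2,2,2,-3,-3)/5` of `A₄`. -/
def w3 : Fin 5 → ℚ := ![2/5, 2/5, 2/5, -3/5, -3/5]
/-- The fundamental weight `w₄ = (1,1,1,1,-4)/5` of `A₄`. -/
def w4 : Fin 5 → ℚ := ![1/5, 1/5, 1/5, 1/5, -4/5]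

/-- The weight lattice `A₄^∨ = ℤw₁ + ℤw₂ + ℤw₃ + ℤw₄`.  The rescaled lattice `A₄^∨(5)`
is this group equipped with the bilinear form `5⟨·,·⟩`. -/
def A4dual : AddSubgroup (Fin 5 → ℚ) := AddSubgroup.closure {w1, w2, w3, w4}

/-- The dual lattice `(1/5)A₄ = {a/5 : a ∈ A₄}` of `A₄^∨(5)`. -/
def fifthA4 : AddSubgroup (Fin 5 → ℚ) :=
  A4.map (DistribMulAction.toAddMonoidHom (Fin 5 → ℚ) ((5 : ℚ)⁻¹))

/-- The hyperplane `V = {x ∈ ℚ^5 : x₁ + ⋯ + x₅ = 0}`. -/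
def V0 : Submodule ℚ (Fin 5 → ℚ) where
  carrier := {x | ∑ i, x i = 0}
  zero_mem' := by simp
  add_mem' := by
    intro a b ha hb
    simp only [Set.mem_setOf_eq] at *
    simp [Pi.add_apply, Finset.sum_add_distrib, ha, hb]
  smul_mem' := by
    intro c a ha
    simp only [Set.mem_setOf_eq] at *
    simp [Pi.smul_apply, ← Finset.mul_sum, ha]

/-- The discriminant group `D = ((1/5)A₄)/A₄^∨` of the lattice `A₄^∨(5)`. -/
abbrev Disc := fifthA4 ⧸ (A4dual.addSubgroupOf fifthA4)

/-! ### Auxiliary machinery -/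

set_option synthInstance.maxSize 2000
set_option synthInstance.maxHeartbeats 1000000
set_option maxHeartbeats 10000000
set_option maxRecDepth 1000000

section FiniteModel

/-- The discriminant quadratic form (times 5, modulo 10) on the finite model `(ℤ/5)³`. -/
def Q10 (d : Fin 3 → ZMod 5) : ZMod 10 :=
  ((((d 0 + d 1 + d 2).val : ℤ)^2 + (((d 1 + d 2).val : ℤ))^2 + (((d 2).val : ℤ))^2
    + (((d 0 + d 1 + d 2).val : ℤ) + ((d 1 + d 2).val : ℤ) + ((d 2).val : ℤ))^2 : ℤ) : ZMod 10)

def E0 : Fin 3 → ZMod 5 := ![1,0,0]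
def E1 : Fin 3 → ZMod 5 := ![0,1,0]
def E2 : Fin 3 → ZMod 5 := ![0,0,1]

/-- A representative in `(ℤ/5)⁵` (summing to zero) of a model vector. -/
def vrep (d : Fin 3 → ZMod 5) : Fin 5 → ZMod 5 :=
  ![d 0 + d 1 + d 2, d 1 + d 2, d 2, 0, -(d 0 + d 1 + d 2) - (d 1 + d 2) - d 2]

/-- Consecutive differences of the first four coordinates. -/
def del3 (v : Fin 5 → ZMod 5) : Fin 3 → ZMod 5 := ![v 0 - v 1, v 1 - v 2, v 2 - v 3]

/-- The action of a signed coordinate permutation on the finite model. -/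
def Mm (p : Equiv.Perm (Fin 5) × Bool) (d : Fin 3 → ZMod 5) : Fin 3 → ZMod 5 :=
  del3 (fun i => (cond p.2 1 (-1) : ZMod 5) * vrep d (p.1⁻¹ i))

theorem key : ∀ c0 : Fin 3 → ZMod 5, Q10 c0 = Q10 E0 →
    ∀ c1 : Fin 3 → ZMod 5, Q10 c1 = Q10 E1 → Q10 (c0 + c1) = Q10 (E0 + E1) →
    ∀ c2 : Fin 3 → ZMod 5, Q10 c2 = Q10 E2 → Q10 (c0 + c2) = Q10 (E0 + E2) →
    Q10 (c1 + c2) = Q10 (E1 + E2) →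
    ∃ p : Equiv.Perm (Fin 5) × Bool, Mm p E0 = c0 ∧ Mm p E1 = c1 ∧ Mm p E2 = c2 := by
  decide

lemma vrep_add (u v : Fin 3 → ZMod 5) (i : Fin 5) :
    vrep (u + v) i = vrep u i + vrep v i := by
  fin_cases i <;> simp [vrep] <;> ring

lemma vrep_zero (i : Fin 5) : vrep 0 i = 0 := by
  fin_cases i <;> simp [vrep]

lemma Mm_add (p : Equiv.Perm (Fin 5) × Bool) (u v : Fin 3 → ZMod 5) :
    Mm p (u + v) = Mm p u + Mm p v := by
  funext j
  fin_cases j <;> simp [Mm, del3, vrep_add] <;> ring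

lemma Mm_zero (p : Equiv.Perm (Fin 5) × Bool) : Mm p 0 = 0 := by
  funext j
  fin_cases j <;> simp [Mm, del3, vrep_zero]

lemma Mm_nsmul (p : Equiv.Perm (Fin 5) × Bool) (n : ℕ) (d : Fin 3 → ZMod 5) :
    Mm p (n • d) = n • Mm p d := by
  induction n with
  | zero => simpa using Mm_zero p
  | succ n ih => rw [succ_nsmul, succ_nsmul, Mm_add, ih]

lemma del3_shift (v : Fin 5 → ZMod 5) (c : ZMod 5) :
    del3 (fun i => v i - c) = del3 v := by
  funext j
  fin_cases j <;> simp [del3] <;> ring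

lemma zmod5_five : (5 : ZMod 5) = 0 := by decide

lemma vrep_del3 (v : Fin 5 → ZMod 5) (hv : v 0 + v 1 + v 2 + v 3 + v 4 = 0) :
    vrep (del3 v) = fun i => v i - v 3 := by
  funext i
  fin_cases i
  · show (v 0 - v 1) + (v 1 - v 2) + (v 2 - v 3) = v 0 - v 3
    ring
  · show (v 1 - v 2) + (v 2 - v 3) = v 1 - v 3
    ring
  · show v 2 - v 3 = v 2 - v 3
    rfl
  · show (0 : ZMod 5) = v 3 - v 3
    ring
  · show -((v 0 - v 1) + (v 1 - v 2) + (v 2 - v 3)) - ((v 1 - v 2) + (v 2 - v 3))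
        - (v 2 - v 3) = v 4 - v 3
    linear_combination -hv + (v 3) * zmod5_five

lemma decomp (d : Fin 3 → ZMod 5) :
    (d 0).val • E0 + (d 1).val • E1 + (d 2).val • E2 = d := by
  funext j
  fin_cases j <;>
    simp [E0, E1, E2, nsmul_eq_mul, ZMod.natCast_val, ZMod.cast_id]

end FiniteModel

section Lattice

/-- The integer vector `5x` attached to an element of `(1/5)A₄`. -/
def zc (x : Fin 5 → ℚ) (i : Fin 5) : ℤ := (5 * x i).num

lemma mem_fifthA4_iff {x : Fin 5 → ℚ} :
    x ∈ fifthA4 ↔ (∀ i, ∃ n : ℤ, 5 * x i = (n : ℚ)) ∧ ∑ i, x i = 0 := by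
  constructor
  · rintro ⟨a, ha, rfl⟩
    obtain ⟨ha1, ha2⟩ := ha
    refine ⟨fun i => ?_, ?_⟩
    · obtain ⟨n, hn⟩ := ha1 i
      refine ⟨n, ?_⟩
      show (5:ℚ) * ((5:ℚ)⁻¹ • a) i = (n:ℚ)
      rw [Pi.smul_apply, smul_eq_mul, ← hn]; ring
    · show ∑ i, ((5:ℚ)⁻¹ • a) i = 0
      simp only [Pi.smul_apply, smul_eq_mul, ← Finset.mul_sum, ha2, mul_zero]
  · rintro ⟨h, h0⟩
    refine ⟨(5:ℚ) • x, ⟨fun i => ?_, ?_⟩, ?_⟩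
    · obtain ⟨n, hn⟩ := h i
      exact ⟨n, by simpa using hn⟩
    · simp only [Pi.smul_apply, smul_eq_mul, ← Finset.mul_sum, h0, mul_zero]
    · show (5:ℚ)⁻¹ • (5:ℚ) • x = x
      rw [smul_smul]; norm_num

lemma zc_cast {x : Fin 5 → ℚ} (hx : x ∈ fifthA4) (i : Fin 5) :
    ((zc x i : ℤ) : ℚ) = 5 * x i := by
  obtain ⟨n, hn⟩ := (mem_fifthA4_iff.mp hx).1 i
  rw [zc, hn, Rat.num_intCast]

lemma zc_eq {x : Fin 5 → ℚ} (hx : x ∈ fifthA4) {i : Fin 5} {n : ℤ}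
    (h : 5 * x i = (n : ℚ)) : zc x i = n := by
  have h2 := zc_cast hx i
  rw [h] at h2
  exact_mod_cast h2

lemma zc_sum {x : Fin 5 → ℚ} (hx : x ∈ fifthA4) : ∑ i, zc x i = 0 := by
  have h : ((∑ i, zc x i : ℤ) : ℚ) = 0 := by
    push_cast
    rw [Finset.sum_congr rfl fun i _ => zc_cast hx i, ← Finset.mul_sum,
      (mem_fifthA4_iff.mp hx).2, mul_zero]
  exact_mod_cast h

lemma zc_sub {x y : Fin 5 → ℚ} (hx : x ∈ fifthA4) (hy : y ∈ fifthA4) (i : Fin 5) :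
    zc (x - y) i = zc x i - zc y i := by
  refine zc_eq (sub_mem hx hy) ?_
  push_cast
  rw [zc_cast hx i, zc_cast hy i, Pi.sub_apply]
  ring

lemma zc_add {x y : Fin 5 → ℚ} (hx : x ∈ fifthA4) (hy : y ∈ fifthA4) (i : Fin 5) :
    zc (x + y) i = zc x i + zc y i := by
  refine zc_eq (add_mem hx hy) ?_
  push_cast
  rw [zc_cast hx i, zc_cast hy i, Pi.add_apply]
  ring

lemma fifthA4_le_V0 {x : Fin 5 → ℚ} (hx : x ∈ fifthA4) : x ∈ V0 :=
  (mem_fifthA4_iff.mp hx).2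

/-- Concrete description of the weight lattice. -/
lemma mem_A4dual_iff {x : Fin 5 → ℚ} :
    x ∈ A4dual ↔ ∃ a : Fin 5 → ℤ, (∀ i, ((a i : ℤ) : ℚ) = 5 * x i) ∧ (∑ i, a i = 0)
      ∧ (∀ i, ((a i : ℤ) : ZMod 5) = ((a 0 : ℤ) : ZMod 5)) := by
  constructor
  · intro hx
    let S : AddSubgroup (Fin 5 → ℚ) :=
      { carrier := {x | ∃ a : Fin 5 → ℤ, (∀ i, ((a i : ℤ) : ℚ) = 5 * x i) ∧ (∑ i, a i = 0)
          ∧ (∀ i, ((a i : ℤ) : ZMod 5) = ((a 0 : ℤ) : ZMod 5))}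
        zero_mem' := ⟨0, by simp⟩
        add_mem' := by
          rintro u v ⟨a, ha1, ha2, ha3⟩ ⟨b, hb1, hb2, hb3⟩
          refine ⟨a + b, fun i => ?_, ?_, fun i => ?_⟩
          · simp only [Pi.add_apply]; push_cast; rw [ha1 i, hb1 i]; ring
          · simp [Finset.sum_add_distrib, ha2, hb2]
          · simp only [Pi.add_apply]; push_cast; rw [ha3 i, hb3 i]
        neg_mem' := by
          rintro u ⟨a, ha1, ha2, ha3⟩
          refine ⟨-a, fun i => ?_, ?_, fun i => ?_⟩
          · simp only [Pi.neg_apply]; push_cast; rw [ha1 i]; ring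
          · simp [Finset.sum_neg_distrib, ha2]
          · simp only [Pi.neg_apply]; push_cast; rw [ha3 i] }
    have hle : A4dual ≤ S := by
      rw [A4dual]
      refine AddSubgroup.closure_le S |>.mpr ?_
      rintro w (rfl | rfl | rfl | rfl)
      · exact ⟨![4,-1,-1,-1,-1], fun i => by fin_cases i <;> norm_num [w1],
          by decide, by decide⟩
      · exact ⟨![3,3,-2,-2,-2], fun i => by fin_cases i <;> norm_num [w2],
          by decide, by decide⟩
      · exact ⟨![2,2,2,-3,-3], fun i => by fin_cases i <;> norm_num [w3],
          by decide, by decide⟩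
      · exact ⟨![1,1,1,1,-4], fun i => by fin_cases i <;> norm_num [w4],
          by decide, by decide⟩
    exact hle hx
  · rintro ⟨a, ha1, ha2, ha3⟩
    have hdvd : ∀ i : Fin 5, (5:ℤ) ∣ a 0 - a i := by
      intro i
      have h0 : ((a 0 - a i : ℤ) : ZMod 5) = 0 := by push_cast; rw [ha3 i]; ring
      exact_mod_cast (ZMod.intCast_zmod_eq_zero_iff_dvd _ 5).mp h0
    obtain ⟨m1, hm1⟩ := hdvd 1
    obtain ⟨n2, hn2⟩ := hdvd 2
    obtain ⟨n3, hn3⟩ := hdvd 3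
    obtain ⟨n4, hn4⟩ := hdvd 4
    obtain ⟨m2, hm2⟩ : ∃ m : ℤ, a 1 - a 2 = 5 * m := ⟨n2 - m1, by omega⟩
    obtain ⟨m3, hm3⟩ : ∃ m : ℤ, a 2 - a 3 = 5 * m := ⟨n3 - n2, by omega⟩
    obtain ⟨m4, hm4⟩ : ∃ m : ℤ, a 3 - a 4 = 5 * m := ⟨n4 - n3, by omega⟩
    have hsum : a 0 + a 1 + a 2 + a 3 + a 4 = 0 := by
      have := ha2; rwa [Fin.sum_univ_five] at this
    have ha0 : a 0 = 4*m1 + 3*m2 + 2*m3 + m4 := by omega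
    have ha1' : a 1 = -m1 + 3*m2 + 2*m3 + m4 := by omega
    have ha2' : a 2 = -m1 - 2*m2 + 2*m3 + m4 := by omega
    have ha3' : a 3 = -m1 - 2*m2 - 3*m3 + m4 := by omega
    have ha4' : a 4 = -m1 - 2*m2 - 3*m3 - 4*m4 := by omega
    have hcoord : ∀ (i : Fin 5) (c1 c2 c3 c4 : ℚ), w1 i = c1 → w2 i = c2 → w3 i = c3 →
        w4 i = c4 → a i = m1 * (5*c1) + m2 * (5*c2) + m3 * (5*c3) + m4 * (5*c4) →
        x i = (m1 • w1 + m2 • w2 + m3 • w3 + m4 • w4) i := by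
      intro i c1 c2 c3 c4 hc1 hc2 hc3 hc4 hval
      have h5 : (5:ℚ) * x i = ((a i : ℤ) : ℚ) := (ha1 i).symm
      have hrhs : (m1 • w1 + m2 • w2 + m3 • w3 + m4 • w4) i
          = (m1:ℚ) * c1 + (m2:ℚ) * c2 + (m3:ℚ) * c3 + (m4:ℚ) * c4 := by
        simp [Pi.smul_apply, Pi.mul_apply, zsmul_eq_mul, hc1, hc2, hc3, hc4]
      rw [hval] at h5
      rw [hrhs]
      linear_combination h5 / 5
    have hx : x = m1 • w1 + m2 • w2 + m3 • w3 + m4 • w4 := by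
      funext i
      fin_cases i
      · exact hcoord 0 (4/5) (3/5) (2/5) (1/5) rfl rfl rfl rfl (by rw [ha0]; push_cast; ring)
      · exact hcoord 1 (-1/5) (3/5) (2/5) (1/5) rfl rfl rfl rfl (by rw [ha1']; push_cast; ring)
      · exact hcoord 2 (-1/5) (-2/5) (2/5) (1/5) rfl rfl rfl rfl (by rw [ha2']; push_cast; ring)
      · exact hcoord 3 (-1/5) (-2/5) (-3/5) (1/5) rfl rfl rfl rfl (by rw [ha3']; push_cast; ring)
      · exact hcoord 4 (-1/5) (-2/5) (-3/5) (-4/5) rfl rfl rfl rfl (by rw [ha4']; push_cast; ring)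
    rw [hx, A4dual]
    have hw : ∀ w ∈ ({w1, w2, w3, w4} : Set (Fin 5 → ℚ)),
        w ∈ AddSubgroup.closure {w1, w2, w3, w4} :=
      fun w hw => AddSubgroup.subset_closure hw
    refine add_mem (add_mem (add_mem ?_ ?_) ?_) ?_ <;>
      refine zsmul_mem (hw _ (by simp)) _

lemma A4dual_le_V0 {x : Fin 5 → ℚ} (hx : x ∈ A4dual) : x ∈ V0 := by
  obtain ⟨a, ha1, ha2, _⟩ := mem_A4dual_iff.mp hx
  show ∑ i, x i = 0
  have h : (5:ℚ) * ∑ i, x i = 0 := by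
    rw [Finset.mul_sum]
    rw [Finset.sum_congr rfl fun i _ => (ha1 i).symm]
    exact_mod_cast congrArg (fun t : ℤ => (t : ℚ)) ha2
  linarith

lemma A4dual_le_fifthA4 {x : Fin 5 → ℚ} (hx : x ∈ A4dual) : x ∈ fifthA4 := by
  obtain ⟨a, ha1, ha2, _⟩ := mem_A4dual_iff.mp hx
  exact mem_fifthA4_iff.mpr ⟨fun i => ⟨a i, (ha1 i).symm⟩, A4dual_le_V0 hx⟩

/-- Reduction mod 5 of the integer vector `5x`. -/
def Phi (x : Fin 5 → ℚ) : Fin 5 → ZMod 5 := fun i => ((zc x i : ℤ) : ZMod 5)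

/-- The isomorphism invariant of the class of `x` in the discriminant group. -/
def Psi (x : fifthA4) : Fin 3 → ZMod 5 := del3 (Phi (x : Fin 5 → ℚ))

lemma Phi_sum {x : Fin 5 → ℚ} (hx : x ∈ fifthA4) :
    Phi x 0 + Phi x 1 + Phi x 2 + Phi x 3 + Phi x 4 = 0 := by
  have h : ((∑ i, zc x i : ℤ) : ZMod 5) = 0 := by rw [zc_sum hx]; rfl
  rw [Fin.sum_univ_five] at h
  push_cast at h
  exact h

lemma Psi_sub (x y : fifthA4) : Psi (x - y) = Psi x - Psi y := by
  have hc : ((x - y : fifthA4) : Fin 5 → ℚ) = (x : Fin 5 → ℚ) - y := rfl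
  funext j
  fin_cases j <;>
    simp [Psi, del3, Phi, hc, zc_sub x.2 y.2] <;> push_cast <;> ring

lemma Psi_add (x y : fifthA4) : Psi (x + y) = Psi x + Psi y := by
  have hc : ((x + y : fifthA4) : Fin 5 → ℚ) = (x : Fin 5 → ℚ) + y := rfl
  funext j
  fin_cases j <;>
    simp [Psi, del3, Phi, hc, zc_add x.2 y.2] <;> push_cast <;> ring

lemma Psi_zero : Psi 0 = 0 := by
  funext j
  fin_cases j <;> simp [Psi, del3, Phi, zc]

lemma Psi_nsmul (n : ℕ) (x : fifthA4) : Psi (n • x) = n • Psi x := by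
  induction n with
  | zero => simpa using Psi_zero
  | succ n ih => rw [succ_nsmul, succ_nsmul, Psi_add, ih]

lemma Psi_eq_zero_iff (x : fifthA4) : Psi x = 0 ↔ (x : Fin 5 → ℚ) ∈ A4dual := by
  constructor
  · intro h
    have h0 : Phi (x : Fin 5 → ℚ) 0 - Phi (x : Fin 5 → ℚ) 1 = 0 := by
      have := congrFun h 0; simpa [Psi, del3] using this
    have h1 : Phi (x : Fin 5 → ℚ) 1 - Phi (x : Fin 5 → ℚ) 2 = 0 := by
      have := congrFun h 1; simpa [Psi, del3] using this
    have h2 : Phi (x : Fin 5 → ℚ) 2 - Phi (x : Fin 5 → ℚ) 3 = 0 := by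
      have := congrFun h 2; simpa [Psi, del3] using this
    have hs := Phi_sum x.2
    refine mem_A4dual_iff.mpr ⟨zc (x : Fin 5 → ℚ), fun i => zc_cast x.2 i, zc_sum x.2, ?_⟩
    intro i
    show Phi (x : Fin 5 → ℚ) i = Phi (x : Fin 5 → ℚ) 0
    fin_cases i
    · rfl
    · show Phi ((x : Fin 5 → ℚ)) 1 = Phi ((x : Fin 5 → ℚ)) 0
      linear_combination -h0
    · show Phi ((x : Fin 5 → ℚ)) 2 = Phi ((x : Fin 5 → ℚ)) 0
      linear_combination -h0 - h1
    · show Phi ((x : Fin 5 → ℚ)) 3 = Phi ((x : Fin 5 → ℚ)) 0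
      linear_combination -h0 - h1 - h2
    · show Phi ((x : Fin 5 → ℚ)) 4 = Phi ((x : Fin 5 → ℚ)) 0
      linear_combination hs + 3*h0 + 2*h1 + h2 - (Phi ((x : Fin 5 → ℚ)) 0) * zmod5_five
  · intro h
    obtain ⟨a, ha1, ha2, ha3⟩ := mem_A4dual_iff.mp h
    have hzc : ∀ i, zc (x : Fin 5 → ℚ) i = a i := fun i => zc_eq x.2 (ha1 i).symm
    have hphi : ∀ i, Phi (x : Fin 5 → ℚ) i = ((a 0 : ℤ) : ZMod 5) := by
      intro i; rw [Phi, hzc i]; exact ha3 i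
    funext j
    fin_cases j <;> simp [Psi, del3, hphi]

lemma mk_eq_iff (x y : fifthA4) :
    (QuotientAddGroup.mk x : Disc) = QuotientAddGroup.mk y ↔ Psi x = Psi y := by
  rw [QuotientAddGroup.eq_iff_sub_mem, AddSubgroup.mem_addSubgroupOf,
    ← Psi_eq_zero_iff, Psi_sub, sub_eq_zero]

end Lattice
section QuadForm

/-- Mod-10 invariance of the sum of squares on classes mod the weight lattice. -/
lemma sq_sum_mod (a b : Fin 5 → ℤ)
    (ha : a 0 + a 1 + a 2 + a 3 + a 4 = 0) (hb : b 0 + b 1 + b 2 + b 3 + b 4 = 0)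
    (hc : ∀ i, ((a i - b i : ℤ) : ZMod 5) = ((a 0 - b 0 : ℤ) : ZMod 5)) :
    ∃ k : ℤ, (a 0^2 + a 1^2 + a 2^2 + a 3^2 + a 4^2)
      - (b 0^2 + b 1^2 + b 2^2 + b 3^2 + b 4^2) = 10 * k := by
  set c : ℤ := a 0 - b 0 with hcdef
  have hdvd : ∀ i, (5:ℤ) ∣ (a i - b i) - c := by
    intro i
    have h0 : (((a i - b i) - c : ℤ) : ZMod 5) = 0 := by push_cast [hc i, hcdef]; ring
    exact_mod_cast (ZMod.intCast_zmod_eq_zero_iff_dvd _ 5).mp h0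
  obtain ⟨m0, hm0⟩ := hdvd 0
  obtain ⟨m1, hm1⟩ := hdvd 1
  obtain ⟨m2, hm2⟩ := hdvd 2
  obtain ⟨m3, hm3⟩ := hdvd 3
  obtain ⟨m4, hm4⟩ := hdvd 4
  have hmsum : c + (m0 + m1 + m2 + m3 + m4) = 0 := by omega
  obtain ⟨ec, hec⟩ : ∃ e : ℤ, c^2 - c = 2 * e := ⟨(c^2 - c)/2, by
    have : (2:ℤ) ∣ c^2 - c := by
      have := Int.even_mul_succ_self (c - 1)
      obtain ⟨r, hr⟩ := this
      exact ⟨r, by linarith [hr]⟩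
    omega⟩
  have hem : ∀ m : ℤ, ∃ e : ℤ, m^2 - m = 2 * e := by
    intro m
    refine ⟨(m^2 - m)/2, ?_⟩
    have : (2:ℤ) ∣ m^2 - m := by
      obtain ⟨r, hr⟩ := Int.even_mul_succ_self (m - 1)
      exact ⟨r, by linarith [hr]⟩
    omega
  obtain ⟨e0, he0⟩ := hem m0
  obtain ⟨e1, he1⟩ := hem m1
  obtain ⟨e2, he2⟩ := hem m2
  obtain ⟨e3, he3⟩ := hem m3
  obtain ⟨e4, he4⟩ := hem m4
  refine ⟨(b 0 * m0 + b 1 * m1 + b 2 * m2 + b 3 * m3 + b 4 * m4)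
    + c * (m0 + m1 + m2 + m3 + m4) + ec + 2*(m0+m1+m2+m3+m4)
    + 5*(e0+e1+e2+e3+e4), ?_⟩
  have h0 : a 0 = b 0 + c + 5 * m0 := by omega
  have h1 : a 1 = b 1 + c + 5 * m1 := by omega
  have h2 : a 2 = b 2 + c + 5 * m2 := by omega
  have h3 : a 3 = b 3 + c + 5 * m3 := by omega
  have h4 : a 4 = b 4 + c + 5 * m4 := by omega
  rw [h0, h1, h2, h3, h4]
  linear_combination (2*c) * hb + 5 * hec + 5 * hmsum
    + 25*he0 + 25*he1 + 25*he2 + 25*he3 + 25*he4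

/-- An integer representative of a model vector. -/
def irep (d : Fin 3 → ZMod 5) : Fin 5 → ℤ :=
  ![((d 0 + d 1 + d 2).val : ℤ), ((d 1 + d 2).val : ℤ), ((d 2).val : ℤ), 0,
    -(((d 0 + d 1 + d 2).val : ℤ) + ((d 1 + d 2).val : ℤ) + ((d 2).val : ℤ))]

lemma irep_sum (d : Fin 3 → ZMod 5) :
    irep d 0 + irep d 1 + irep d 2 + irep d 3 + irep d 4 = 0 := by
  show ((d 0 + d 1 + d 2).val : ℤ) + ((d 1 + d 2).val : ℤ) + ((d 2).val : ℤ) + 0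
    + -(((d 0 + d 1 + d 2).val : ℤ) + ((d 1 + d 2).val : ℤ) + ((d 2).val : ℤ)) = 0
  ring

lemma irep_cast (d : Fin 3 → ZMod 5) :
    ((irep d 0 : ℤ) : ZMod 5) = d 0 + d 1 + d 2
    ∧ ((irep d 1 : ℤ) : ZMod 5) = d 1 + d 2
    ∧ ((irep d 2 : ℤ) : ZMod 5) = d 2
    ∧ ((irep d 3 : ℤ) : ZMod 5) = 0
    ∧ ((irep d 4 : ℤ) : ZMod 5) = -(d 0 + d 1 + d 2) - (d 1 + d 2) - d 2 := by
  have hv : ∀ v : ZMod 5, ((((v.val : ℕ) : ℤ)) : ZMod 5) = v := by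
    intro v
    push_cast
    simp [ZMod.natCast_val, ZMod.cast_id]
  refine ⟨?_, ?_, ?_, ?_, ?_⟩
  · show ((((d 0 + d 1 + d 2).val : ℕ) : ℤ) : ZMod 5) = _
    rw [hv]
  · show ((((d 1 + d 2).val : ℕ) : ℤ) : ZMod 5) = _
    rw [hv]
  · show ((((d 2).val : ℕ) : ℤ) : ZMod 5) = _
    rw [hv]
  · show (((0:ℤ)) : ZMod 5) = _
    simp
  · show ((-((((d 0 + d 1 + d 2).val : ℕ) : ℤ) + (((d 1 + d 2).val : ℕ) : ℤ)
      + (((d 2).val : ℕ) : ℤ)) : ℤ) : ZMod 5) = _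
    push_cast
    have hv2 : ∀ v : ZMod 5, ((v.val : ℕ) : ZMod 5) = v := by
      intro v; simp [ZMod.natCast_val, ZMod.cast_id]
    rw [hv2, hv2, hv2]
    ring

lemma Q10_eq (d : Fin 3 → ZMod 5) :
    Q10 d = ((irep d 0^2 + irep d 1^2 + irep d 2^2 + irep d 3^2 + irep d 4^2 : ℤ) : ZMod 10) := by
  rw [Q10]
  congr 1
  simp [irep]
  ring

/-- The quadratic invariant of a lattice class is computed by `Q10` of its model image. -/
lemma key5 (x : fifthA4) :
    ((zc (x : Fin 5 → ℚ) 0^2 + zc (x : Fin 5 → ℚ) 1^2 + zc (x : Fin 5 → ℚ) 2^2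
      + zc (x : Fin 5 → ℚ) 3^2 + zc (x : Fin 5 → ℚ) 4^2 : ℤ) : ZMod 10) = Q10 (Psi x) := by
  set a : Fin 5 → ℤ := zc (x : Fin 5 → ℚ) with hadef
  set d : Fin 3 → ZMod 5 := Psi x with hddef
  have hPhi : ∀ i, ((a i : ℤ) : ZMod 5) = Phi (x : Fin 5 → ℚ) i := fun i => rfl
  have hd0 : d 0 = Phi (x : Fin 5 → ℚ) 0 - Phi (x : Fin 5 → ℚ) 1 := rfl
  have hd1 : d 1 = Phi (x : Fin 5 → ℚ) 1 - Phi (x : Fin 5 → ℚ) 2 := rfl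
  have hd2 : d 2 = Phi (x : Fin 5 → ℚ) 2 - Phi (x : Fin 5 → ℚ) 3 := rfl
  have hs := Phi_sum x.2
  obtain ⟨hb0, hb1, hb2, hb3, hb4⟩ := irep_cast d
  have hasum : a 0 + a 1 + a 2 + a 3 + a 4 = 0 := by
    have := zc_sum x.2; rwa [Fin.sum_univ_five] at this
  have hc0 : ((a 0 - irep d 0 : ℤ) : ZMod 5) = ((a 0 - irep d 0 : ℤ) : ZMod 5) := rfl
  have hc1 : ((a 1 - irep d 1 : ℤ) : ZMod 5) = ((a 0 - irep d 0 : ℤ) : ZMod 5) := by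
    rw [Int.cast_sub, Int.cast_sub, hPhi 1, hPhi 0, hb0, hb1, hd0, hd1, hd2]; ring
  have hc2 : ((a 2 - irep d 2 : ℤ) : ZMod 5) = ((a 0 - irep d 0 : ℤ) : ZMod 5) := by
    rw [Int.cast_sub, Int.cast_sub, hPhi 2, hPhi 0, hb0, hb2, hd0, hd1, hd2]; ring
  have hc3 : ((a 3 - irep d 3 : ℤ) : ZMod 5) = ((a 0 - irep d 0 : ℤ) : ZMod 5) := by
    rw [Int.cast_sub, Int.cast_sub, hPhi 3, hPhi 0, hb0, hb3, hd0, hd1, hd2]; ring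
  have hc4 : ((a 4 - irep d 4 : ℤ) : ZMod 5) = ((a 0 - irep d 0 : ℤ) : ZMod 5) := by
    rw [Int.cast_sub, Int.cast_sub, hPhi 4, hPhi 0, hb0, hb4, hd0, hd1, hd2]
    linear_combination hs - (Phi ((x : Fin 5 → ℚ)) 3) * zmod5_five
  have hc : ∀ i, ((a i - irep d i : ℤ) : ZMod 5) = ((a 0 - irep d 0 : ℤ) : ZMod 5) := by
    intro i
    fin_cases i
    · exact hc0
    · exact hc1
    · exact hc2
    · exact hc3
    · exact hc4
  obtain ⟨k, hk⟩ := sq_sum_mod a (irep d) hasum (irep_sum d) hc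
  have : ((a 0^2 + a 1^2 + a 2^2 + a 3^2 + a 4^2 : ℤ) : ZMod 10)
      = ((irep d 0^2 + irep d 1^2 + irep d 2^2 + irep d 3^2 + irep d 4^2 : ℤ) : ZMod 10) := by
    have h10 : ((10 * k : ℤ) : ZMod 10) = 0 := by
      rw [Int.cast_mul, show ((10:ℤ) : ZMod 10) = 0 by decide, zero_mul]
    have := congrArg (fun t : ℤ => (t : ZMod 10)) hk
    push_cast at this h10 ⊢
    linear_combination this + h10
  rw [this, Q10_eq]

end QuadForm
section Action

def sgnQ (b : Bool) : ℚ := cond b 1 (-1)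
def sgnZ (b : Bool) : ℤ := cond b 1 (-1)
def sgnM (b : Bool) : ZMod 5 := cond b 1 (-1)

lemma sgnQ_cast (b : Bool) : ((sgnZ b : ℤ) : ℚ) = sgnQ b := by
  cases b <;> simp [sgnZ, sgnQ]

lemma sgnM_cast (b : Bool) : ((sgnZ b : ℤ) : ZMod 5) = sgnM b := by
  cases b <;> simp [sgnZ, sgnM]

lemma sgnQ_sq (b : Bool) : sgnQ b * sgnQ b = 1 := by
  cases b <;> norm_num [sgnQ]

/-- The signed permutation action on `ℚ⁵`. -/
def gact (σ : Equiv.Perm (Fin 5)) (b : Bool) (v : Fin 5 → ℚ) : Fin 5 → ℚ :=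
  fun i => sgnQ b * v (σ⁻¹ i)

lemma gact_sum (σ : Equiv.Perm (Fin 5)) (b : Bool) (v : Fin 5 → ℚ) :
    ∑ i, gact σ b v i = sgnQ b * ∑ i, v i := by
  simp only [gact]
  rw [← Finset.mul_sum]
  congr 1
  exact Equiv.sum_comp σ⁻¹ v

lemma gact_mem_fifthA4 (σ : Equiv.Perm (Fin 5)) (b : Bool) {v : Fin 5 → ℚ}
    (hv : v ∈ fifthA4) : gact σ b v ∈ fifthA4 := by
  refine mem_fifthA4_iff.mpr ⟨fun i => ⟨sgnZ b * zc v (σ⁻¹ i), ?_⟩, ?_⟩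
  · push_cast [sgnQ_cast]
    rw [zc_cast hv (σ⁻¹ i), gact]
    ring
  · rw [gact_sum, (mem_fifthA4_iff.mp hv).2, mul_zero]

lemma zc_gact (σ : Equiv.Perm (Fin 5)) (b : Bool) {v : Fin 5 → ℚ}
    (hv : v ∈ fifthA4) (i : Fin 5) :
    zc (gact σ b v) i = sgnZ b * zc v (σ⁻¹ i) := by
  refine zc_eq (gact_mem_fifthA4 σ b hv) ?_
  push_cast [sgnQ_cast]
  rw [zc_cast hv (σ⁻¹ i), gact]
  ring

lemma gact_mem_A4dual (σ : Equiv.Perm (Fin 5)) (b : Bool) {v : Fin 5 → ℚ}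
    (hv : v ∈ A4dual) : gact σ b v ∈ A4dual := by
  obtain ⟨a, ha1, ha2, ha3⟩ := mem_A4dual_iff.mp hv
  refine mem_A4dual_iff.mpr ⟨fun i => sgnZ b * a (σ⁻¹ i), fun i => ?_, ?_, fun i => ?_⟩
  · push_cast [sgnQ_cast]
    rw [ha1 (σ⁻¹ i), gact]
    ring
  · have : ∑ i, sgnZ b * a (σ⁻¹ i) = sgnZ b * ∑ i, a (σ⁻¹ i) := by
      rw [Finset.mul_sum]
    rw [this, Equiv.sum_comp σ⁻¹ a, ha2, mul_zero]
  · push_cast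
    rw [ha3 (σ⁻¹ i), ha3 (σ⁻¹ 0)]

/-- `Psi` intertwines the geometric action and the model action. -/
lemma Psi_gact (σ : Equiv.Perm (Fin 5)) (b : Bool) {v : Fin 5 → ℚ}
    (hv : v ∈ fifthA4) (hgv : gact σ b v ∈ fifthA4) :
    Psi ⟨gact σ b v, hgv⟩ = Mm (σ, b) (Psi ⟨v, hv⟩) := by
  have hPhig : ∀ i, Phi (gact σ b v) i = sgnM b * Phi v (σ⁻¹ i) := by
    intro i
    rw [Phi, zc_gact σ b hv i, Int.cast_mul, sgnM_cast]
    rfl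
  have hsum := Phi_sum hv
  have harg : (fun i => (cond b 1 (-1) : ZMod 5) * vrep (del3 (Phi v)) (σ⁻¹ i))
      = fun i => sgnM b * (Phi v (σ⁻¹ i) - Phi v 3) := by
    funext i
    rw [vrep_del3 (Phi v) hsum]
    rfl
  have hMm : Mm (σ, b) (Psi ⟨v, hv⟩)
      = del3 (fun i => sgnM b * (Phi v (σ⁻¹ i) - Phi v 3)) :=
    congrArg del3 harg
  rw [hMm]
  have h2 : (fun i => sgnM b * (Phi v (σ⁻¹ i) - Phi v 3))
      = fun i => Phi (gact σ b v) i - sgnM b * Phi v 3 := by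
    funext i
    rw [hPhig i]
    ring
  rw [h2, del3_shift (Phi (gact σ b v)) (sgnM b * Phi v 3)]
  rfl

end Action

section BasePoints

def X0v : Fin 5 → ℚ := ![1/5, 0, 0, 0, -(1/5)]
def X1v : Fin 5 → ℚ := ![1/5, 1/5, 0, 0, -(2/5)]
def X2v : Fin 5 → ℚ := ![1/5, 1/5, 1/5, 0, -(3/5)]

lemma X0mem : X0v ∈ fifthA4 := by
  refine mem_fifthA4_iff.mpr ⟨fun i => ?_, by norm_num [X0v, Fin.sum_univ_five, Matrix.cons_val_two, Matrix.cons_val_three, Matrix.cons_val_four]⟩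
  fin_cases i
  · exact ⟨1, by norm_num [X0v]⟩
  · exact ⟨0, by norm_num [X0v]⟩
  · exact ⟨0, by norm_num [X0v]⟩
  · exact ⟨0, by norm_num [X0v]⟩
  · exact ⟨-1, by norm_num [X0v]⟩

lemma X1mem : X1v ∈ fifthA4 := by
  refine mem_fifthA4_iff.mpr ⟨fun i => ?_, by norm_num [X1v, Fin.sum_univ_five, Matrix.cons_val_two, Matrix.cons_val_three, Matrix.cons_val_four]⟩
  fin_cases i
  · exact ⟨1, by norm_num [X1v]⟩
  · exact ⟨1, by norm_num [X1v]⟩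
  · exact ⟨0, by norm_num [X1v]⟩
  · exact ⟨0, by norm_num [X1v]⟩
  · exact ⟨-2, by norm_num [X1v]⟩

lemma X2mem : X2v ∈ fifthA4 := by
  refine mem_fifthA4_iff.mpr ⟨fun i => ?_, by norm_num [X2v, Fin.sum_univ_five, Matrix.cons_val_two, Matrix.cons_val_three, Matrix.cons_val_four]⟩
  fin_cases i
  · exact ⟨1, by norm_num [X2v]⟩
  · exact ⟨1, by norm_num [X2v]⟩
  · exact ⟨1, by norm_num [X2v]⟩
  · exact ⟨0, by norm_num [X2v]⟩
  · exact ⟨-3, by norm_num [X2v]⟩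

def X0 : fifthA4 := ⟨X0v, X0mem⟩
def X1 : fifthA4 := ⟨X1v, X1mem⟩
def X2 : fifthA4 := ⟨X2v, X2mem⟩

lemma Psi_X0 : Psi X0 = E0 := by
  have z0 : zc X0v 0 = 1 := zc_eq X0mem (by norm_num [X0v])
  have z1 : zc X0v 1 = 0 := zc_eq X0mem (by norm_num [X0v])
  have z2 : zc X0v 2 = 0 := zc_eq X0mem (by norm_num [X0v, Matrix.cons_val_two, Matrix.cons_val_three, Matrix.cons_val_four])
  have z3 : zc X0v 3 = 0 := zc_eq X0mem (by norm_num [X0v, Matrix.cons_val_two, Matrix.cons_val_three, Matrix.cons_val_four])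
  funext j
  fin_cases j <;> simp [Psi, del3, Phi, X0, z0, z1, z2, z3, E0]

lemma Psi_X1 : Psi X1 = E1 := by
  have z0 : zc X1v 0 = 1 := zc_eq X1mem (by norm_num [X1v])
  have z1 : zc X1v 1 = 1 := zc_eq X1mem (by norm_num [X1v])
  have z2 : zc X1v 2 = 0 := zc_eq X1mem (by norm_num [X1v, Matrix.cons_val_two, Matrix.cons_val_three, Matrix.cons_val_four])
  have z3 : zc X1v 3 = 0 := zc_eq X1mem (by norm_num [X1v, Matrix.cons_val_two, Matrix.cons_val_three, Matrix.cons_val_four])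
  funext j
  fin_cases j <;> simp [Psi, del3, Phi, X1, z0, z1, z2, z3, E1]

lemma Psi_X2 : Psi X2 = E2 := by
  have z0 : zc X2v 0 = 1 := zc_eq X2mem (by norm_num [X2v])
  have z1 : zc X2v 1 = 1 := zc_eq X2mem (by norm_num [X2v])
  have z2 : zc X2v 2 = 1 := zc_eq X2mem (by norm_num [X2v, Matrix.cons_val_two, Matrix.cons_val_three, Matrix.cons_val_four])
  have z3 : zc X2v 3 = 0 := zc_eq X2mem (by norm_num [X2v, Matrix.cons_val_two, Matrix.cons_val_three, Matrix.cons_val_four])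
  funext j
  fin_cases j <;> simp [Psi, del3, Phi, X2, z0, z1, z2, z3, E2]

end BasePoints
section GEquiv

/-- The isometry of `V` given by a signed coordinate permutation. -/
def gequiv (σ : Equiv.Perm (Fin 5)) (b : Bool) : V0 ≃ₗ[ℚ] V0 where
  toFun v := ⟨gact σ b ↑v, by
    show ∑ i, gact σ b (↑v) i = 0
    rw [gact_sum, show ∑ i, (v : Fin 5 → ℚ) i = 0 from v.2, mul_zero]⟩
  map_add' u v := Subtype.ext (funext fun i => by
    show gact σ b (↑u + ↑v) i = gact σ b ↑u i + gact σ b ↑v i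
    simp [gact]; ring)
  map_smul' c v := Subtype.ext (funext fun i => by
    show gact σ b (c • ↑v) i = c * gact σ b ↑v i
    simp [gact]; ring)
  invFun v := ⟨gact σ⁻¹ b ↑v, by
    show ∑ i, gact σ⁻¹ b (↑v) i = 0
    rw [gact_sum, show ∑ i, (v : Fin 5 → ℚ) i = 0 from v.2, mul_zero]⟩
  left_inv v := Subtype.ext (funext fun i => by
    show gact σ⁻¹ b (gact σ b ↑v) i = (v : Fin 5 → ℚ) i
    rw [gact, gact, inv_inv, (by simp : σ⁻¹ (σ i) = i), ← mul_assoc, sgnQ_sq, one_mul])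
  right_inv v := Subtype.ext (funext fun i => by
    show gact σ b (gact σ⁻¹ b ↑v) i = (v : Fin 5 → ℚ) i
    rw [gact, gact, inv_inv, (by simp : σ (σ⁻¹ i) = i), ← mul_assoc, sgnQ_sq, one_mul])

lemma gequiv_form (σ : Equiv.Perm (Fin 5)) (b : Bool) (x y : V0) :
    form ((gequiv σ b x : V0) : Fin 5 → ℚ) ((gequiv σ b y : V0) : Fin 5 → ℚ)
      = form (x : Fin 5 → ℚ) (y : Fin 5 → ℚ) := by
  have hx : ((gequiv σ b x : V0) : Fin 5 → ℚ) = gact σ b ↑x := rfl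
  have hy : ((gequiv σ b y : V0) : Fin 5 → ℚ) = gact σ b ↑y := rfl
  rw [hx, hy, form, form]
  have hterm : ∀ i, gact σ b ↑x i * gact σ b ↑y i
      = (fun j => (x : Fin 5 → ℚ) j * (y : Fin 5 → ℚ) j) (σ⁻¹ i) := by
    intro i
    show sgnQ b * (x : Fin 5 → ℚ) (σ⁻¹ i) * (sgnQ b * (y : Fin 5 → ℚ) (σ⁻¹ i))
      = (x : Fin 5 → ℚ) (σ⁻¹ i) * (y : Fin 5 → ℚ) (σ⁻¹ i)
    rw [show sgnQ b * (x : Fin 5 → ℚ) (σ⁻¹ i) * (sgnQ b * (y : Fin 5 → ℚ) (σ⁻¹ i))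
      = (sgnQ b * sgnQ b) * ((x : Fin 5 → ℚ) (σ⁻¹ i) * (y : Fin 5 → ℚ) (σ⁻¹ i)) by ring,
      sgnQ_sq, one_mul]
  rw [Finset.sum_congr rfl fun i _ => hterm i]
  exact Equiv.sum_comp σ⁻¹ (fun j => (x : Fin 5 → ℚ) j * (y : Fin 5 → ℚ) j)

lemma gequiv_image (σ : Equiv.Perm (Fin 5)) (b : Bool) :
    (fun x : V0 => ((gequiv σ b) x : Fin 5 → ℚ)) '' {x : V0 | (x : Fin 5 → ℚ) ∈ A4dual}
      = {v : Fin 5 → ℚ | v ∈ A4dual} := by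
  ext v
  constructor
  · rintro ⟨x, hx, rfl⟩
    exact gact_mem_A4dual σ b hx
  · intro hv
    have hv0 : v ∈ V0 := A4dual_le_V0 hv
    refine ⟨(gequiv σ b).symm ⟨v, hv0⟩, ?_, ?_⟩
    · show (((gequiv σ b).symm ⟨v, hv0⟩ : V0) : Fin 5 → ℚ) ∈ A4dual
      exact gact_mem_A4dual σ⁻¹ b hv
    · show ((gequiv σ b) ((gequiv σ b).symm ⟨v, hv0⟩) : Fin 5 → ℚ) = v
      rw [LinearEquiv.apply_symm_apply]

end GEquiv

section Quot

lemma mk_add' (u v : fifthA4) : (QuotientAddGroup.mk (u + v) : Disc)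
    = QuotientAddGroup.mk u + QuotientAddGroup.mk v := rfl

lemma mk_nsmul' (n : ℕ) (v : fifthA4) : (QuotientAddGroup.mk (n • v) : Disc)
    = n • QuotientAddGroup.mk v := by
  simpa using map_nsmul (QuotientAddGroup.mk' (A4dual.addSubgroupOf fifthA4)) v n

lemma zc_sq_sum (x : fifthA4) :
    ((zc (x : Fin 5 → ℚ) 0^2 + zc (x : Fin 5 → ℚ) 1^2 + zc (x : Fin 5 → ℚ) 2^2
      + zc (x : Fin 5 → ℚ) 3^2 + zc (x : Fin 5 → ℚ) 4^2 : ℤ) : ℚ)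
      = 25 * form (x : Fin 5 → ℚ) (x : Fin 5 → ℚ) := by
  rw [form, Fin.sum_univ_five]
  push_cast
  rw [zc_cast x.2 0, zc_cast x.2 1, zc_cast x.2 2, zc_cast x.2 3, zc_cast x.2 4]
  ring

lemma Q10_diff (x y : fifthA4) (k : ℤ)
    (hk : 5 * form (x : Fin 5 → ℚ) (x : Fin 5 → ℚ)
      - 5 * form (y : Fin 5 → ℚ) (y : Fin 5 → ℚ) = 2 * (k : ℚ)) :
    Q10 (Psi y) = Q10 (Psi x) := by
  have e1 := zc_sq_sum x
  have e2 := zc_sq_sum y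
  have hQ : ((zc (x : Fin 5 → ℚ) 0^2 + zc (x : Fin 5 → ℚ) 1^2 + zc (x : Fin 5 → ℚ) 2^2
      + zc (x : Fin 5 → ℚ) 3^2 + zc (x : Fin 5 → ℚ) 4^2 : ℤ) : ℚ)
      - ((zc (y : Fin 5 → ℚ) 0^2 + zc (y : Fin 5 → ℚ) 1^2 + zc (y : Fin 5 → ℚ) 2^2
      + zc (y : Fin 5 → ℚ) 3^2 + zc (y : Fin 5 → ℚ) 4^2 : ℤ) : ℚ) = 10 * k := by
    rw [e1, e2]
    linarith
  have hZ : (zc (x : Fin 5 → ℚ) 0^2 + zc (x : Fin 5 → ℚ) 1^2 + zc (x : Fin 5 → ℚ) 2^2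
      + zc (x : Fin 5 → ℚ) 3^2 + zc (x : Fin 5 → ℚ) 4^2)
      - (zc (y : Fin 5 → ℚ) 0^2 + zc (y : Fin 5 → ℚ) 1^2 + zc (y : Fin 5 → ℚ) 2^2
      + zc (y : Fin 5 → ℚ) 3^2 + zc (y : Fin 5 → ℚ) 4^2) = 10 * k := by
    exact_mod_cast hQ
  have h10 : ((10 * k : ℤ) : ZMod 10) = 0 := by
    rw [Int.cast_mul, show ((10:ℤ) : ZMod 10) = 0 by decide, zero_mul]
  have hcast := congrArg (fun t : ℤ => (t : ZMod 10)) hZ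
  simp only [Int.cast_sub] at hcast
  rw [h10] at hcast
  rw [← key5 x, ← key5 y]
  linear_combination -hcast

end Quot
/-- The natural homomorphism `O(A₄^∨(5)) → O(D)` is surjective: every
automorphism `f` of the discriminant group `D = ((1/5)A₄)/A₄^∨` preserving the
discriminant quadratic form is induced by a `ℚ`-linear isometry `g` of `V` with
`g(A₄^∨) = A₄^∨`. -/
theorem O_to_O_disc_surjective :
    ∀ f : Disc ≃+ Disc,
      (∀ x y : fifthA4, f (QuotientAddGroup.mk x) = QuotientAddGroup.mk y →
        ∃ k : ℤ, 5 * form (x : Fin 5 → ℚ) (x : Fin 5 → ℚ)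
            - 5 * form (y : Fin 5 → ℚ) (y : Fin 5 → ℚ) = 2 * (k : ℚ)) →
      ∃ g : V0 ≃ₗ[ℚ] V0,
        (∀ x y : V0, form (g x : Fin 5 → ℚ) (g y : Fin 5 → ℚ)
            = form (x : Fin 5 → ℚ) (y : Fin 5 → ℚ)) ∧
        ((fun x : V0 => (g x : Fin 5 → ℚ)) '' {x : V0 | (x : Fin 5 → ℚ) ∈ A4dual}
            = {v : Fin 5 → ℚ | v ∈ A4dual}) ∧
        (∀ (x : Fin 5 → ℚ) (hx : x ∈ fifthA4) (hx0 : x ∈ V0) (y : fifthA4),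
          f (QuotientAddGroup.mk ⟨x, hx⟩) = QuotientAddGroup.mk y →
          (y : Fin 5 → ℚ) - (g ⟨x, hx0⟩ : Fin 5 → ℚ) ∈ A4dual) := by
  intro f hf
  have hq : ∀ x y : fifthA4, f (QuotientAddGroup.mk x) = QuotientAddGroup.mk y →
      Q10 (Psi y) = Q10 (Psi x) := by
    intro x y h
    obtain ⟨k, hk⟩ := hf x y h
    exact Q10_diff x y k hk
  obtain ⟨Y0, hY0⟩ := QuotientAddGroup.mk_surjective (f (QuotientAddGroup.mk X0))
  obtain ⟨Y1, hY1⟩ := QuotientAddGroup.mk_surjective (f (QuotientAddGroup.mk X1))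
  obtain ⟨Y2, hY2⟩ := QuotientAddGroup.mk_surjective (f (QuotientAddGroup.mk X2))
  have hfX0 : f (QuotientAddGroup.mk X0) = QuotientAddGroup.mk Y0 := hY0.symm
  have hfX1 : f (QuotientAddGroup.mk X1) = QuotientAddGroup.mk Y1 := hY1.symm
  have hfX2 : f (QuotientAddGroup.mk X2) = QuotientAddGroup.mk Y2 := hY2.symm
  have c0 : Q10 (Psi Y0) = Q10 E0 := by rw [hq X0 Y0 hfX0, Psi_X0]
  have c1 : Q10 (Psi Y1) = Q10 E1 := by rw [hq X1 Y1 hfX1, Psi_X1]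
  have c2 : Q10 (Psi Y2) = Q10 E2 := by rw [hq X2 Y2 hfX2, Psi_X2]
  have hfadd01 : f (QuotientAddGroup.mk (X0 + X1)) = QuotientAddGroup.mk (Y0 + Y1) := by
    rw [mk_add', map_add, hfX0, hfX1, ← mk_add']
  have hfadd02 : f (QuotientAddGroup.mk (X0 + X2)) = QuotientAddGroup.mk (Y0 + Y2) := by
    rw [mk_add', map_add, hfX0, hfX2, ← mk_add']
  have hfadd12 : f (QuotientAddGroup.mk (X1 + X2)) = QuotientAddGroup.mk (Y1 + Y2) := by
    rw [mk_add', map_add, hfX1, hfX2, ← mk_add']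
  have c01 : Q10 (Psi Y0 + Psi Y1) = Q10 (E0 + E1) := by
    rw [← Psi_add, hq _ _ hfadd01, Psi_add, Psi_X0, Psi_X1]
  have c02 : Q10 (Psi Y0 + Psi Y2) = Q10 (E0 + E2) := by
    rw [← Psi_add, hq _ _ hfadd02, Psi_add, Psi_X0, Psi_X2]
  have c12 : Q10 (Psi Y1 + Psi Y2) = Q10 (E1 + E2) := by
    rw [← Psi_add, hq _ _ hfadd12, Psi_add, Psi_X1, Psi_X2]
  obtain ⟨p, hp0, hp1, hp2⟩ := key (Psi Y0) c0 (Psi Y1) c1 c01 (Psi Y2) c2 c02 c12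
  obtain ⟨σ, b⟩ := p
  -- the induced action on the discriminant group agrees with `f`
  have hind : ∀ z y : fifthA4, f (QuotientAddGroup.mk z) = QuotientAddGroup.mk y →
      Psi y = Mm (σ, b) (Psi z) := by
    intro z y hzy
    have hPsiw : Psi ((Psi z 0).val • X0 + (Psi z 1).val • X1 + (Psi z 2).val • X2)
        = Psi z := by
      rw [Psi_add, Psi_add, Psi_nsmul, Psi_nsmul, Psi_nsmul, Psi_X0, Psi_X1, Psi_X2]
      exact decomp (Psi z)
    have hzw : (QuotientAddGroup.mk z : Disc)
        = QuotientAddGroup.mk ((Psi z 0).val • X0 + (Psi z 1).val • X1 + (Psi z 2).val • X2) :=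
      (mk_eq_iff _ _).mpr (by rw [hPsiw])
    have hfw : f (QuotientAddGroup.mk
          ((Psi z 0).val • X0 + (Psi z 1).val • X1 + (Psi z 2).val • X2))
        = QuotientAddGroup.mk ((Psi z 0).val • Y0 + (Psi z 1).val • Y1 + (Psi z 2).val • Y2) := by
      rw [mk_add', mk_add', mk_nsmul', mk_nsmul', mk_nsmul', map_add, map_add,
        map_nsmul, map_nsmul, map_nsmul, hfX0, hfX1, hfX2,
        ← mk_nsmul', ← mk_nsmul', ← mk_nsmul', ← mk_add', ← mk_add']
    have hyw : (QuotientAddGroup.mk y : Disc)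
        = QuotientAddGroup.mk ((Psi z 0).val • Y0 + (Psi z 1).val • Y1 + (Psi z 2).val • Y2) := by
      rw [← hzy, hzw, hfw]
    have hPsiy : Psi y = (Psi z 0).val • Psi Y0 + (Psi z 1).val • Psi Y1
        + (Psi z 2).val • Psi Y2 := by
      rw [(mk_eq_iff _ _).mp hyw, Psi_add, Psi_add, Psi_nsmul, Psi_nsmul, Psi_nsmul]
    rw [hPsiy, ← hp0, ← hp1, ← hp2, ← Mm_nsmul, ← Mm_nsmul, ← Mm_nsmul,
      ← Mm_add, ← Mm_add, decomp (Psi z)]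
  refine ⟨gequiv σ b, gequiv_form σ b, gequiv_image σ b, ?_⟩
  intro x hx hx0 y hfxy
  have hgmem : gact σ b x ∈ fifthA4 := gact_mem_fifthA4 σ b hx
  have h1 : Psi y = Mm (σ, b) (Psi ⟨x, hx⟩) := hind ⟨x, hx⟩ y hfxy
  have h2 : Psi ⟨gact σ b x, hgmem⟩ = Mm (σ, b) (Psi ⟨x, hx⟩) := Psi_gact σ b hx hgmem
  have h3 : Psi (y - ⟨gact σ b x, hgmem⟩) = 0 := by
    rw [Psi_sub, h1, h2, sub_self]
  have h4 := (Psi_eq_zero_iff _).mp h3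
  exact h4
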